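/- arXiv:1902.09786 — 3 statements merged into one kernel-verified Lean document; each statement's English description precedes it below -/
import Mathlib

section
/- Liouville's formula for the flow-map gradient: let n ≥ 1, let A : ℝ → Matrix (Fin n) (Fin n) ℝ be continuous, let t₀ ∈ ℝ, and let M : ℝ → Matrix (Fin n) (Fin n) ℝ be differentiable with M(t₀) = 1 (the identity matrix) and M'(t) = A(t) * M(t) for all t. Then for every t, det (M(t)) = exp (∫_{t₀}^{t} trace (A(s)) ds). -/
open Matrix

/-- The determinant, as a continuous multilinear map in the rows (bound `n!`). -/
lemma det_bound_aux (n : ℕ) (m : Fin n → Fin n → ℝ) :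
    ‖Matrix.detRowAlternating (R := ℝ) (n := Fin n) m‖ ≤ ((Nat.factorial n : ℕ) : ℝ) * ∏ i, ‖m i‖ := by
  have hdet : (Matrix.detRowAlternating (R := ℝ) (n := Fin n) m : ℝ)
      = Matrix.det (Matrix.of m) := rfl
  rw [hdet, Matrix.det_apply]
  calc ‖∑ σ : Equiv.Perm (Fin n), Equiv.Perm.sign σ • ∏ i, Matrix.of m (σ i) i‖
      ≤ ∑ σ : Equiv.Perm (Fin n), ‖Equiv.Perm.sign σ • ∏ i, Matrix.of m (σ i) i‖ :=
        norm_sum_le _ _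
    _ ≤ ∑ _σ : Equiv.Perm (Fin n), ∏ i, ‖m i‖ := by
        refine Finset.sum_le_sum fun σ _ => ?_
        have hsgn : ‖Equiv.Perm.sign σ • ∏ i, Matrix.of m (σ i) i‖
            = ‖∏ i, m (σ i) i‖ := by
          rcases Int.units_eq_one_or (Equiv.Perm.sign σ) with h | h <;>
            simp [h, Units.smul_def]
        rw [hsgn, norm_prod]
        have h1 : ∏ i, ‖m (σ i) i‖ ≤ ∏ i, ‖m (σ i)‖ :=
          Finset.prod_le_prod (fun i _ => norm_nonneg _)
            (fun i _ => norm_le_pi_norm (m (σ i)) i)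
        calc ∏ i, ‖m (σ i) i‖ ≤ ∏ i, ‖m (σ i)‖ := h1
          _ = ∏ i, ‖m i‖ := Equiv.prod_comp σ fun i => ‖m i‖
    _ = ((Nat.factorial n : ℕ) : ℝ) * ∏ i, ‖m i‖ := by
        simp [Finset.card_univ, Fintype.card_perm]

/-- Jacobi-type derivative of the determinant along a differentiable matrix curve. -/
lemma det_hasDerivAt_aux (n : ℕ) (M : ℝ → Matrix (Fin n) (Fin n) ℝ)
    (M' : Matrix (Fin n) (Fin n) ℝ) (t : ℝ)
    (h : ∀ i j, HasDerivAt (fun s => M s i j) (M' i j) t) :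
    HasDerivAt (fun s => (M s).det)
      (∑ i, (Matrix.updateRow (M t) i (M' i)).det) t := by
  let D : ContinuousMultilinearMap ℝ (fun _ : Fin n => (Fin n → ℝ)) ℝ :=
    MultilinearMap.mkContinuous
      (Matrix.detRowAlternating (R := ℝ) (n := Fin n)).toMultilinearMap
      (Nat.factorial n) (det_bound_aux n)
  have hρ : HasDerivAt (F := (_ : Fin n) → (Fin n → ℝ)) (fun s i => M s i) (fun i => M' i) t :=
    hasDerivAt_pi.2 fun i => hasDerivAt_pi.2 fun j => h i j
  have hD := (D.hasFDerivAt (x := fun i => M t i)).comp_hasDerivAt t hρ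
  have key : (fun s => (M s).det) = (fun s => D (fun i => M s i)) := by
    funext s
    simp only [D, MultilinearMap.coe_mkContinuous]
    rfl
  rw [key]
  refine hD.congr_deriv ?_
  rw [ContinuousMultilinearMap.linearDeriv_apply]
  refine Finset.sum_congr rfl fun i _ => ?_
  simp only [D, MultilinearMap.coe_mkContinuous]
  rfl

/-- **Liouville's formula for the flow-map gradient.**
Let `n ≥ 1`, let `A : ℝ → Matrix (Fin n) (Fin n) ℝ` be continuous, let `t₀ ∈ ℝ`, and let
`M : ℝ → Matrix (Fin n) (Fin n) ℝ` be differentiable (entrywise) with `M t₀ = 1` and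
`M' t = A t * M t` for all `t`.  Then for every `t`,
`det (M t) = exp (∫ s in t₀..t, trace (A s))`. -/
theorem liouville_formula_flow_map_gradient
    (n : ℕ) (hn : 1 ≤ n)
    (A : ℝ → Matrix (Fin n) (Fin n) ℝ) (hA : Continuous A)
    (t₀ : ℝ)
    (M : ℝ → Matrix (Fin n) (Fin n) ℝ)
    (hM0 : M t₀ = 1)
    (hM : ∀ t, ∀ i j : Fin n, HasDerivAt (fun s => M s i j) ((A t * M t) i j) t) :
    ∀ t : ℝ, (M t).det = Real.exp (∫ s in t₀..t, (A s).trace) := by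
  intro t
  set c : ℝ → ℝ := fun s => (A s).trace with hc_def
  have hc : Continuous c := hA.matrix_trace
  set I : ℝ → ℝ := fun u => ∫ s in t₀..u, c s with hI_def
  have hI : ∀ u, HasDerivAt I (c u) u := fun u =>
    (intervalIntegral.integral_hasStrictDerivAt_right
      (hc.intervalIntegrable _ _) (hc.stronglyMeasurableAtFilter _ _)
      hc.continuousAt).hasDerivAt
  have hdet : ∀ u, HasDerivAt (fun s => (M s).det) (c u * (M u).det) u := by
    intro u
    have haux := det_hasDerivAt_aux n M (A u * M u) u (hM u)
    have hval : ∑ i, (Matrix.updateRow (M u) i ((A u * M u) i)).det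
        = c u * (M u).det := by
      have hrow : ∀ i, (Matrix.updateRow (M u) i ((A u * M u) i)).det
          = A u i i * (M u).det := by
        intro i
        have hrw : (A u * M u) i = ∑ k, (A u i k) • (M u k) := by
          funext j
          simp [Matrix.mul_apply]
        rw [hrw, Matrix.det_updateRow_sum]
        simp
      rw [Finset.sum_congr rfl fun i _ => hrow i, ← Finset.sum_mul]
      simp [hc_def, Matrix.trace, Matrix.diag]
    rwa [hval] at haux
  have hh : ∀ u, HasDerivAt (fun u => (M u).det * Real.exp (-(I u))) 0 u := by
    intro u
    have h2 : HasDerivAt (fun u => Real.exp (-(I u)))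
        (Real.exp (-(I u)) * (-(c u))) u := ((hI u).neg).exp
    have := (hdet u).mul h2
    refine this.congr_deriv ?_
    ring
  have hconst : (M t).det * Real.exp (-(I t)) = (M t₀).det * Real.exp (-(I t₀)) :=
    is_const_of_deriv_eq_zero (fun x => (hh x).differentiableAt)
      (fun x => (hh x).deriv) t t₀
  have hIt₀ : I t₀ = 0 := intervalIntegral.integral_same
  have h1 : (M t).det * Real.exp (-(I t)) = 1 := by
    rw [hconst, hM0, hIt₀]
    simp
  calc (M t).det = (M t).det * Real.exp (-(I t)) * Real.exp (I t) := by
        rw [mul_assoc, ← Real.exp_add]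
        simp
    _ = Real.exp (I t) := by rw [h1, one_mul]
end

section
/- Proposition (no closed constrained uniform barriers where A^± has definite symmetric part): let Ω denote the 2×2 rotation matrix with rows (0, 1) and (−1, 0), and let I denote the 2×2 identity matrix. Let c₀ : ℝ² → ℝ be C¹, let T̄ : ℝ² → Matrix (Fin 2) (Fin 2) ℝ be continuous with T̄(x) symmetric positive definite for all x, let 𝒯₀ ≥ 0, and fix a sign ε ∈ {+1, −1}. Let D ⊆ ℝ² be a set such that for every x ∈ D: ∇c₀(x) ≠ 0, ‖T̄(x)∇c₀(x)‖ ≥ 𝒯₀, and the symmetric part of the matrix A(x) := (𝒯₀ Ω + ε √(‖T̄(x)∇c₀(x)‖² − 𝒯₀²) I) T̄(x) is positive definite (or negative definite, uniformly over D). Then any differentiable x : ℝ → ℝ² with x'(s) = (1/‖T̄(x(s))∇c₀(x(s))‖²) A(x(s)) ∇c₀(x(s)) and x(s) ∈ D for all s is not periodic: there is no p > 0 with x(s + p) = x(s) for all s. -/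
open Matrix
open scoped RealInnerProductSpace



lemma inner_toEuclideanLin' (M : Matrix (Fin 2) (Fin 2) ℝ) (v : EuclideanSpace ℝ (Fin 2)) :
    ⟪v, Matrix.toEuclideanLin M v⟫ =
      (WithLp.equiv 2 (Fin 2 → ℝ) v) ⬝ᵥ (M *ᵥ WithLp.equiv 2 (Fin 2 → ℝ) v) := by
  simp [PiLp.inner_apply, Matrix.toEuclideanLin_apply, dotProduct]; ring

lemma symquad' (A : Matrix (Fin 2) (Fin 2) ℝ) (w : Fin 2 → ℝ) :
    w ⬝ᵥ (((1 / 2 : ℝ) • (A + Aᵀ)) *ᵥ w) = w ⬝ᵥ (A *ᵥ w) := by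
  have h : w ⬝ᵥ (Aᵀ *ᵥ w) = w ⬝ᵥ (A *ᵥ w) := by
    rw [Matrix.mulVec_transpose, dotProduct_comm, ← Matrix.dotProduct_mulVec]
  rw [Matrix.smul_mulVec, Matrix.add_mulVec, dotProduct_smul, dotProduct_add, h]
  simp [smul_eq_mul]; ring

/-- **No closed constrained uniform barriers where `A^±` has definite symmetric part
(Proposition 5.5).**  With `Ω = !![0,1;-1,0]`, `T̄` continuous, symmetric positive definite,
`𝒯₀ ≥ 0`, a fixed sign `ε = ±1`, and `D ⊆ ℝ²` a set on which `∇c₀ ≠ 0`,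
`‖T̄∇c₀‖ ≥ 𝒯₀`, and the symmetric part of
`A x = (𝒯₀ Ω + ε √(‖T̄ x ∇c₀ x‖² − 𝒯₀²) I) * T̄ x` is positive definite (or negative
definite, uniformly over `D`), no solution of
`x' = (1/‖T̄∇c₀‖²) A ∇c₀` staying in `D` is periodic. -/
theorem constrained_uniform_barrier_not_periodic
    (Ω : Matrix (Fin 2) (Fin 2) ℝ) (hΩ : Ω = !![0, 1; -1, 0])
    (c₀ : EuclideanSpace ℝ (Fin 2) → ℝ) (hc₀ : ContDiff ℝ 1 c₀)
    (T : EuclideanSpace ℝ (Fin 2) → Matrix (Fin 2) (Fin 2) ℝ)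
    (hTcont : Continuous T)
    (hTpd : ∀ x, (T x).PosDef)
    (𝒯₀ : ℝ) (h𝒯₀ : 0 ≤ 𝒯₀)
    (ε : ℝ) (hε : ε = 1 ∨ ε = -1)
    (A : EuclideanSpace ℝ (Fin 2) → Matrix (Fin 2) (Fin 2) ℝ)
    (hA : ∀ x, A x =
      (𝒯₀ • Ω +
        (ε * Real.sqrt (‖Matrix.toEuclideanLin (T x) (gradient c₀ x)‖ ^ 2 - 𝒯₀ ^ 2)) •
          (1 : Matrix (Fin 2) (Fin 2) ℝ)) * T x)
    (D : Set (EuclideanSpace ℝ (Fin 2)))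
    (hDgrad : ∀ x ∈ D, gradient c₀ x ≠ 0)
    (hDnorm : ∀ x ∈ D, 𝒯₀ ≤ ‖Matrix.toEuclideanLin (T x) (gradient c₀ x)‖)
    (hdef : (∀ x ∈ D, ((1 / 2 : ℝ) • (A x + (A x)ᵀ)).PosDef) ∨
            (∀ x ∈ D, (-((1 / 2 : ℝ) • (A x + (A x)ᵀ))).PosDef))
    (x : ℝ → EuclideanSpace ℝ (Fin 2))
    (hx : ∀ s, HasDerivAt x
      ((‖Matrix.toEuclideanLin (T (x s)) (gradient c₀ (x s))‖ ^ 2)⁻¹ •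
        Matrix.toEuclideanLin (A (x s)) (gradient c₀ (x s))) s)
    (hxD : ∀ s, x s ∈ D) :
    ¬ ∃ p : ℝ, 0 < p ∧ ∀ s, x (s + p) = x s := by
  rintro ⟨p, hp, hper⟩
  set g : ℝ → ℝ := fun s => c₀ (x s) with hg
  -- notation
  set w : ℝ → (Fin 2 → ℝ) := fun s => WithLp.equiv 2 (Fin 2 → ℝ) (gradient c₀ (x s)) with hw
  have hwne : ∀ s, w s ≠ 0 := by
    intro s h
    exact hDgrad (x s) (hxD s) ((WithLp.equiv 2 (Fin 2 → ℝ)).injective h)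
  -- positivity of the norm factor
  have hnormpos : ∀ s,
      0 < (‖Matrix.toEuclideanLin (T (x s)) (gradient c₀ (x s))‖ ^ 2)⁻¹ := by
    intro s
    have hne : Matrix.toEuclideanLin (T (x s)) (gradient c₀ (x s)) ≠ 0 := by
      intro h
      have h2 := (hTpd (x s)).dotProduct_mulVec_pos (hwne s)
      rw [show star (w s) = w s from rfl] at h2
      have h3 : (w s) ⬝ᵥ (T (x s) *ᵥ w s) = 0 := by
        rw [← inner_toEuclideanLin', h, inner_zero_right]
      rw [h3] at h2; exact lt_irrefl 0 h2
    have hn : 0 < ‖Matrix.toEuclideanLin (T (x s)) (gradient c₀ (x s))‖ := norm_pos_iff.mpr hne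
    exact inv_pos.mpr (pow_pos hn 2)
  -- derivative of g
  have hgder : ∀ s, HasDerivAt g
      ((‖Matrix.toEuclideanLin (T (x s)) (gradient c₀ (x s))‖ ^ 2)⁻¹ *
        ((w s) ⬝ᵥ (A (x s) *ᵥ w s))) s := by
    intro s
    have hdiff : DifferentiableAt ℝ c₀ (x s) := (hc₀.differentiable one_ne_zero).differentiableAt
    have h2 : HasFDerivAt c₀
        ((InnerProductSpace.toDual ℝ (EuclideanSpace ℝ (Fin 2))) (gradient c₀ (x s))) (x s) :=
      hdiff.hasGradientAt.hasFDerivAt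
    have h3 := h2.comp_hasDerivAt s (hx s)
    have h4 : ((InnerProductSpace.toDual ℝ (EuclideanSpace ℝ (Fin 2))) (gradient c₀ (x s)))
        ((‖Matrix.toEuclideanLin (T (x s)) (gradient c₀ (x s))‖ ^ 2)⁻¹ •
          Matrix.toEuclideanLin (A (x s)) (gradient c₀ (x s))) =
        (‖Matrix.toEuclideanLin (T (x s)) (gradient c₀ (x s))‖ ^ 2)⁻¹ *
          ((w s) ⬝ᵥ (A (x s) *ᵥ w s)) := by
      rw [InnerProductSpace.toDual_apply_apply, real_inner_smul_right, inner_toEuclideanLin']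
    rw [h4] at h3
    exact h3
  -- quadratic form sign
  have hquad := fun s => symquad' (A (x s)) (w s)
  have hgs : g p = g 0 := by rw [hg]; simp [show x p = x 0 by simpa using hper 0]
  rcases hdef with hpos | hneg
  · have hmono : StrictMono g := by
      apply strictMono_of_deriv_pos
      intro s
      rw [(hgder s).deriv]
      have h2 := (hpos (x s) (hxD s)).dotProduct_mulVec_pos (hwne s)
      rw [show star (w s) = w s from rfl, hquad s] at h2
      exact mul_pos (hnormpos s) h2
    exact absurd hgs (ne_of_gt (hmono hp))
  · have hmono : StrictAnti g := by
      apply strictAnti_of_deriv_neg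
      intro s
      rw [(hgder s).deriv]
      have h2 := (hneg (x s) (hxD s)).dotProduct_mulVec_pos (hwne s)
      rw [show star (w s) = w s from rfl, Matrix.neg_mulVec, dotProduct_neg, hquad s] at h2
      have : (w s) ⬝ᵥ (A (x s) *ᵥ w s) < 0 := by linarith
      exact mul_neg_of_pos_of_neg (hnormpos s) this
    exact absurd hgs (ne_of_lt (hmono hp))
end

section
/- Null directions of the transport tensor in two dimensions (core of Theorem 4.3): let C be a 2×2 real symmetric positive definite matrix with eigenvalues λ₁ < λ₂ and corresponding orthonormal eigenvectors ξ₁, ξ₂ ∈ ℝ² (so C ξᵢ = λᵢ ξᵢ, ‖ξᵢ‖ = 1, ⟨ξ₁, ξ₂⟩ = 0). Set T̄ := (det C) · C⁻¹. For any 𝒯₀ with λ₁ ≤ 𝒯₀ ≤ λ₂ and any sign ε ∈ {+1, −1}, define η := √((λ₂ − 𝒯₀)/(λ₂ − λ₁)) ξ₁ + ε √((𝒯₀ − λ₁)/(λ₂ − λ₁)) ξ₂. Then ‖η‖ = 1, and every unit vector n ∈ ℝ² orthogonal to η satisfies ⟨n, T̄ n⟩ = 𝒯₀, i.e., ⟨n,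 (T̄ − 𝒯₀ I) n⟩ = 0. Conversely, if e ∈ ℝ² is a unit vector such that every unit vector orthogonal to e satisfies ⟨n, T̄ n⟩ = 𝒯₀, then e = ± η for one of the two sign choices ε. -/
set_option maxHeartbeats 1600000


open Matrix
open scoped RealInnerProductSpace

/-- **Null directions of the transport tensor in two dimensions (core of Theorem 4.3).**
Let `C` be a `2 × 2` real symmetric positive definite matrix with eigenvalues `λ₁ < λ₂` and
orthonormal eigenvectors `ξ₁, ξ₂`, and set `T̄ = (det C) • C⁻¹`.  For `λ₁ ≤ 𝒯₀ ≤ λ₂` and a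
sign `δ = ±1`, the vector `η δ = √((λ₂−𝒯₀)/(λ₂−λ₁)) ξ₁ + δ √((𝒯₀−λ₁)/(λ₂−λ₁)) ξ₂` is a unit
vector and every unit normal `n ⊥ η δ` satisfies `⟨n, T̄ n⟩ = 𝒯₀`.  Conversely, any unit
vector `e` all of whose unit normals satisfy `⟨n, T̄ n⟩ = 𝒯₀` is `± η δ` for some sign `δ`. -/
theorem null_directions_transport_tensor_2D
    (C : Matrix (Fin 2) (Fin 2) ℝ) (hC : C.PosDef)
    (lam₁ lam₂ : ℝ) (hlam : lam₁ < lam₂)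
    (ξ₁ ξ₂ : EuclideanSpace ℝ (Fin 2))
    (hξ₁ : Matrix.toEuclideanLin C ξ₁ = lam₁ • ξ₁)
    (hξ₂ : Matrix.toEuclideanLin C ξ₂ = lam₂ • ξ₂)
    (hξ₁norm : ‖ξ₁‖ = 1) (hξ₂norm : ‖ξ₂‖ = 1) (hortho : ⟪ξ₁, ξ₂⟫ = 0)
    (T : Matrix (Fin 2) (Fin 2) ℝ) (hT : T = C.det • C⁻¹)
    (𝒯₀ : ℝ) (h𝒯₀ : lam₁ ≤ 𝒯₀ ∧ 𝒯₀ ≤ lam₂)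
    (η : ℝ → EuclideanSpace ℝ (Fin 2))
    (hη : ∀ δ : ℝ, η δ = Real.sqrt ((lam₂ - 𝒯₀) / (lam₂ - lam₁)) • ξ₁ +
        δ • (Real.sqrt ((𝒯₀ - lam₁) / (lam₂ - lam₁)) • ξ₂)) :
    (∀ δ : ℝ, (δ = 1 ∨ δ = -1) →
      ‖η δ‖ = 1 ∧
      ∀ nv : EuclideanSpace ℝ (Fin 2), ‖nv‖ = 1 → ⟪nv, η δ⟫ = 0 →
        ⟪nv, Matrix.toEuclideanLin T nv⟫ = 𝒯₀) ∧
    (∀ e : EuclideanSpace ℝ (Fin 2), ‖e‖ = 1 →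
      (∀ nv : EuclideanSpace ℝ (Fin 2), ‖nv‖ = 1 → ⟪nv, e⟫ = 0 →
        ⟪nv, Matrix.toEuclideanLin T nv⟫ = 𝒯₀) →
      ∃ δ : ℝ, (δ = 1 ∨ δ = -1) ∧ (e = η δ ∨ e = -η δ)) := by
  obtain ⟨hT1, hT2⟩ := h𝒯₀
  have hd0 : (0:ℝ) < lam₂ - lam₁ := by linarith
  set α := Real.sqrt ((lam₂ - 𝒯₀) / (lam₂ - lam₁)) with hαdef
  set β := Real.sqrt ((𝒯₀ - lam₁) / (lam₂ - lam₁)) with hβdef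
  have hα0 : 0 ≤ α := Real.sqrt_nonneg _
  have hβ0 : 0 ≤ β := Real.sqrt_nonneg _
  have hα2 : α ^ 2 = (lam₂ - 𝒯₀) / (lam₂ - lam₁) :=
    Real.sq_sqrt (div_nonneg (by linarith) (by linarith))
  have hβ2 : β ^ 2 = (𝒯₀ - lam₁) / (lam₂ - lam₁) :=
    Real.sq_sqrt (div_nonneg (by linarith) (by linarith))
  have hαβ : α ^ 2 + β ^ 2 = 1 := by
    rw [hα2, hβ2]; field_simp; ring
  have hξ₁self : ⟪ξ₁, ξ₁⟫ = 1 := by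
    rw [real_inner_self_eq_norm_sq, hξ₁norm]; norm_num
  have hξ₂self : ⟪ξ₂, ξ₂⟫ = 1 := by
    rw [real_inner_self_eq_norm_sq, hξ₂norm]; norm_num
  have hortho' : ⟪ξ₂, ξ₁⟫ = 0 := by rw [real_inner_comm]; exact hortho
  -- orthonormal basis machinery
  have horth : Orthonormal ℝ ![ξ₁, ξ₂] := by
    rw [orthonormal_iff_ite]
    intro i j
    fin_cases i <;> fin_cases j <;>
      simp_all [hξ₁norm, hξ₂norm, hortho, hortho', hξ₁self, hξ₂self]
  have hcard : Fintype.card (Fin 2) = Module.finrank ℝ (EuclideanSpace ℝ (Fin 2)) := by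
    simp [finrank_euclideanSpace]
  let B : Module.Basis (Fin 2) ℝ (EuclideanSpace ℝ (Fin 2)) :=
    basisOfOrthonormalOfCardEqFinrank horth hcard
  have hB : ⇑B = ![ξ₁, ξ₂] := coe_basisOfOrthonormalOfCardEqFinrank horth hcard
  have hB0 : B 0 = ξ₁ := by rw [hB]; rfl
  have hB1 : B 1 = ξ₂ := by rw [hB]; rfl
  have hspan : ⊤ ≤ Submodule.span ℝ (Set.range ![ξ₁, ξ₂]) := by
    rw [← hB]; exact B.span_eq.ge
  let ob : OrthonormalBasis (Fin 2) ℝ (EuclideanSpace ℝ (Fin 2)) :=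
    OrthonormalBasis.mk horth hspan
  have hob : ⇑ob = ![ξ₁, ξ₂] := OrthonormalBasis.coe_mk horth hspan
  have hdecomp : ∀ v : EuclideanSpace ℝ (Fin 2), v = ⟪ξ₁, v⟫ • ξ₁ + ⟪ξ₂, v⟫ • ξ₂ := by
    intro v
    have h := ob.sum_repr v
    rw [Fin.sum_univ_two] at h
    rw [ob.repr_apply_apply, ob.repr_apply_apply] at h
    have h0 : ob 0 = ξ₁ := by rw [hob]; rfl
    have h1 : ob 1 = ξ₂ := by rw [hob]; rfl
    rw [h0, h1] at h
    exact h.symm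
  have hip : ∀ v w : EuclideanSpace ℝ (Fin 2),
      ⟪v, w⟫ = ⟪ξ₁, v⟫ * ⟪ξ₁, w⟫ + ⟪ξ₂, v⟫ * ⟪ξ₂, w⟫ := by
    intro v w
    conv_lhs => rw [hdecomp v, hdecomp w]
    simp only [inner_add_left, inner_add_right, real_inner_smul_left, real_inner_smul_right,
      hξ₁self, hξ₂self, hortho, hortho']
    ring
  have hnorm : ∀ v : EuclideanSpace ℝ (Fin 2), ‖v‖ = 1 →
      ⟪ξ₁, v⟫ ^ 2 + ⟪ξ₂, v⟫ ^ 2 = 1 := by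
    intro v hv
    have h := hip v v
    rw [real_inner_self_eq_norm_sq, hv] at h
    linear_combination -h
  -- positivity of eigenvalues
  have hquadC : ∀ v : EuclideanSpace ℝ (Fin 2), v ≠ 0 →
      0 < ⟪v, Matrix.toEuclideanLin C v⟫ := by
    intro v hv
    have h := (posDef_iff_dotProduct_mulVec.mp hC).2 (x := (WithLp.equiv 2 (Fin 2 → ℝ)) v) (by
      simpa using hv)
    simpa [PiLp.inner_apply, dotProduct, Matrix.toEuclideanLin_apply,
      mul_comm] using h
  have hξ₁ne : ξ₁ ≠ 0 := by
    intro h; rw [h, norm_zero] at hξ₁norm; norm_num at hξ₁norm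
  have hξ₂ne : ξ₂ ≠ 0 := by
    intro h; rw [h, norm_zero] at hξ₂norm; norm_num at hξ₂norm
  have hl1pos : 0 < lam₁ := by
    have h := hquadC ξ₁ hξ₁ne
    rw [hξ₁, real_inner_smul_right, hξ₁self] at h
    linarith
  have hl2pos : 0 < lam₂ := lt_trans hl1pos hlam
  -- determinant
  have hM : LinearMap.toMatrix B B (Matrix.toEuclideanLin C) = !![lam₁, 0; 0, lam₂] := by
    have r0 : B.repr ξ₁ = Finsupp.single 0 1 := by rw [← hB0, B.repr_self]
    have r1 : B.repr ξ₂ = Finsupp.single 1 1 := by rw [← hB1, B.repr_self]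
    ext i j
    fin_cases i <;> fin_cases j <;>
      simp [LinearMap.toMatrix_apply, hB0, hB1, hξ₁, hξ₂, r0, r1,
        _root_.map_smul, Finsupp.single_apply]
  have hdet : C.det = lam₁ * lam₂ := by
    have h1 : LinearMap.det (Matrix.toEuclideanLin C) = C.det := by
      rw [Matrix.toEuclideanLin_eq_toLin, LinearMap.det_toLin]
    have h2 : (LinearMap.toMatrix B B (Matrix.toEuclideanLin C)).det
        = LinearMap.det (Matrix.toEuclideanLin C) := LinearMap.det_toMatrix B _
    rw [hM, Matrix.det_fin_two_of] at h2
    rw [← h1, ← h2]; ring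
  have hdet0 : C.det ≠ 0 := by rw [hdet]; positivity
  have hTadj : T = C.adjugate := by
    rw [hT, Matrix.inv_def, smul_smul, Ring.inverse_eq_inv, mul_inv_cancel₀ hdet0, one_smul]
  -- eigenvectors of T
  have hmul : Matrix.toEuclideanLin (C.adjugate * C)
      = (Matrix.toEuclideanLin C.adjugate).comp (Matrix.toEuclideanLin C) := by
    simp only [Matrix.toEuclideanLin_eq_toLin]
    exact Matrix.toLin_mul _ _ _ _ _
  have hadjC : Matrix.toEuclideanLin (C.adjugate * C) = Matrix.toEuclideanLin (C.det • 1) := by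
    rw [Matrix.adjugate_mul]
  have hTA : ∀ (v : EuclideanSpace ℝ (Fin 2)) (lam : ℝ),
      Matrix.toEuclideanLin C v = lam • v →
      lam • (Matrix.toEuclideanLin T v) = C.det • v := by
    intro v lam hv
    have h1 : Matrix.toEuclideanLin (C.adjugate * C) v = C.det • v := by
      rw [hadjC, _root_.map_smul]
      congr 1
      rw [Matrix.toEuclideanLin_eq_toLin, Matrix.toLin_one]
      rfl
    rw [hmul] at h1
    simp only [LinearMap.comp_apply, hv, _root_.map_smul] at h1
    rw [← hTadj] at h1
    exact h1
  have hTξ₁ : Matrix.toEuclideanLin T ξ₁ = lam₂ • ξ₁ := by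
    have h := hTA ξ₁ lam₁ hξ₁
    rw [hdet] at h
    have h' : lam₁ • Matrix.toEuclideanLin T ξ₁ = lam₁ • (lam₂ • ξ₁) := by
      rw [h, smul_smul]
    exact smul_right_injective _ hl1pos.ne' h'
  have hTξ₂ : Matrix.toEuclideanLin T ξ₂ = lam₁ • ξ₂ := by
    have h := hTA ξ₂ lam₂ hξ₂
    rw [hdet] at h
    have h' : lam₂ • Matrix.toEuclideanLin T ξ₂ = lam₂ • (lam₁ • ξ₂) := by
      rw [h, smul_smul, mul_comm]
    exact smul_right_injective _ hl2pos.ne' h'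
  -- the quadratic form of T
  have hquadT : ∀ v : EuclideanSpace ℝ (Fin 2),
      ⟪v, Matrix.toEuclideanLin T v⟫ = lam₂ * ⟪ξ₁, v⟫ ^ 2 + lam₁ * ⟪ξ₂, v⟫ ^ 2 := by
    intro v
    have h1 : Matrix.toEuclideanLin T v
        = ⟪ξ₁, v⟫ • (lam₂ • ξ₁) + ⟪ξ₂, v⟫ • (lam₁ • ξ₂) := by
      conv_lhs => rw [hdecomp v]
      rw [_root_.map_add, _root_.map_smul, _root_.map_smul, hTξ₁, hTξ₂]
    rw [hip v (Matrix.toEuclideanLin T v), h1]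
    simp only [inner_add_right, real_inner_smul_right, hξ₁self, hξ₂self, hortho, hortho']
    ring
  constructor
  · -- forward direction
    intro δ hδ
    have hδ2 : δ ^ 2 = 1 := by rcases hδ with h | h <;> simp [h]
    have hη1 : ⟪ξ₁, η δ⟫ = α := by
      rw [hη δ]
      simp only [inner_add_right, real_inner_smul_right, hξ₁self, hortho]
      ring
    have hη2 : ⟪ξ₂, η δ⟫ = δ * β := by
      rw [hη δ]
      simp only [inner_add_right, real_inner_smul_right, hξ₂self, hortho']
      ring
    have hηnorm2 : ‖η δ‖ ^ 2 = 1 := by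
      rw [← real_inner_self_eq_norm_sq, hip (η δ) (η δ), hη1, hη2]
      linear_combination hαβ + β ^ 2 * hδ2
    have hηnorm : ‖η δ‖ = 1 := by
      have hfac : (‖η δ‖ - 1) * (‖η δ‖ + 1) = 0 := by linear_combination hηnorm2
      rcases mul_eq_zero.mp hfac with h' | h'
      · linarith
      · linarith [norm_nonneg (η δ)]
    refine ⟨hηnorm, ?_⟩
    intro nv hnv hperp
    have hab : ⟪ξ₁, nv⟫ ^ 2 + ⟪ξ₂, nv⟫ ^ 2 = 1 := hnorm nv hnv
    set a := ⟪ξ₁, nv⟫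
    set b := ⟪ξ₂, nv⟫
    have hperp' : a * α + b * (δ * β) = 0 := by
      have h := hip nv (η δ)
      rw [hperp, hη1, hη2] at h
      linarith
    have hsq : (a * α) ^ 2 = (b * (δ * β)) ^ 2 := by
      have h : a * α = -(b * (δ * β)) := by linarith
      rw [h]; ring
    have hsq'' : a ^ 2 * α ^ 2 = b ^ 2 * β ^ 2 := by
      linear_combination hsq + b ^ 2 * β ^ 2 * hδ2
    have ha2 : a ^ 2 = β ^ 2 := by
      linear_combination hsq'' - a ^ 2 * hαβ + β ^ 2 * hab
    have hb2 : b ^ 2 = α ^ 2 := by linarith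
    rw [hquadT nv]
    show lam₂ * a ^ 2 + lam₁ * b ^ 2 = 𝒯₀
    rw [ha2, hb2, hα2, hβ2]
    field_simp
    ring
  · -- converse direction
    intro e he hall
    have hab : ⟪ξ₁, e⟫ ^ 2 + ⟪ξ₂, e⟫ ^ 2 = 1 := hnorm e he
    set a := ⟪ξ₁, e⟫ with ha
    set b := ⟪ξ₂, e⟫ with hb
    set n : EuclideanSpace ℝ (Fin 2) := (-b) • ξ₁ + a • ξ₂ with hn
    have hn1 : ⟪ξ₁, n⟫ = -b := by
      rw [hn]
      simp only [inner_add_right, real_inner_smul_right, hξ₁self, hortho]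
      ring
    have hn2 : ⟪ξ₂, n⟫ = a := by
      rw [hn]
      simp only [inner_add_right, real_inner_smul_right, hξ₂self, hortho']
      ring
    have hnnorm : ‖n‖ = 1 := by
      have h : ‖n‖ ^ 2 = 1 := by
        rw [← real_inner_self_eq_norm_sq, hip n n, hn1, hn2]
        linear_combination hab
      have hfac : (‖n‖ - 1) * (‖n‖ + 1) = 0 := by linear_combination h
      rcases mul_eq_zero.mp hfac with h' | h'
      · linarith
      · linarith [norm_nonneg n]
    have hne : ⟪n, e⟫ = 0 := by
      rw [hip n e, hn1, hn2, ← ha, ← hb]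
      ring
    have hval := hall n hnnorm hne
    rw [hquadT n, hn1, hn2] at hval
    have hval' : lam₂ * b ^ 2 + lam₁ * a ^ 2 = 𝒯₀ := by linear_combination hval
    have hb2 : b ^ 2 = β ^ 2 := by
      rw [hβ2, eq_div_iff hd0.ne']
      linear_combination hval' - lam₁ * hab
    have ha2 : a ^ 2 = α ^ 2 := by linarith [hab, hαβ, hb2]
    have haa : a = α ∨ a = -α := sq_eq_sq_iff_eq_or_eq_neg.mp ha2
    have hbb : b = β ∨ b = -β := sq_eq_sq_iff_eq_or_eq_neg.mp hb2
    have hde : e = a • ξ₁ + b • ξ₂ := hdecomp e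
    rcases haa with haα | haα <;> rcases hbb with hbβ | hbβ
    · refine ⟨1, Or.inl rfl, Or.inl ?_⟩
      rw [hde, haα, hbβ, hη 1]
      module
    · refine ⟨-1, Or.inr rfl, Or.inl ?_⟩
      rw [hde, haα, hbβ, hη (-1)]
      module
    · refine ⟨-1, Or.inr rfl, Or.inr ?_⟩
      rw [hde, haα, hbβ, hη (-1)]
      module
    · refine ⟨1, Or.inl rfl, Or.inr ?_⟩
      rw [hde, haα, hbβ, hη 1]
      module
end
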